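/- If B is a VRA obtained from VRAs A₁ and A₂ (with disjoint procedural alphabets over the same pushdown alphabet) by taking as components the union Λ₁ ∪ Λ₂ and a starting automaton B^S whose regular language is L_reg(A₁^S) · L_reg(A₂^S), then L(B) = L(A₁) · L(A₂). -/
import Mathlib


/-- A symbol of a pushdown alphabet: internal, call, or return. -/
inductive VSym (I C R : Type) : Type
  | int  : I → VSym I C R
  | call : C → VSym I C R
  | ret  : R → VSym I C R

/-- The set of well-matched words over a pushdown alphabet. -/
inductive WellMatched {I C R : Type} : List (VSym I C R) → Prop
  | internal (u : List I) : WellMatched (u.map VSym.int)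
  | bracket {w : List (VSym I C R)} (c : C) (r : R) :
      WellMatched w → WellMatched (VSym.call c :: w ++ [VSym.ret r])
  | concat {w₁ w₂ : List (VSym I C R)} :
      WellMatched w₁ → WellMatched w₂ → WellMatched (w₁ ++ w₂)

def VSym.isCall {I C R : Type} : VSym I C R → Bool
  | .call _ => true
  | _ => false

def VSym.isRet {I C R : Type} : VSym I C R → Bool
  | .ret _ => true
  | _ => false

/-- The depth of a word: the maximal excess of call symbols over return symbols
in any prefix (the deepest level of unmatched calls at any point). -/
def VSym.depth {I C R : Type} (w : List (VSym I C R)) : ℕ :=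
  (w.inits.map fun p => p.countP VSym.isCall - p.countP VSym.isRet).foldr max 0

/-- A visibly recursive automaton: a family of finite automata over the internal
and procedural symbols, identified by the component map `comp` (`none` denotes the
starting automaton `A^S`, `some J` the component automaton `A^J`), together with a
linking function `link` assigning to each procedural symbol a call/return pair.
Transitions of each component automaton stay within that component. -/
structure VRA (I C R P Q : Type) where
  /-- the linking function `f : Σ_proc → Σ_call × Σ_ret` -/
  link : P → C × R
  /-- the component automaton each state belongs to (`none` = starting automaton) -/
  comp : Q → Option P
  init : Q → Prop
  final : Q → Prop
  intTrans : Q → I → Q → Prop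
  procTrans : Q → P → Q → Prop
  intTrans_comp : ∀ ⦃q a p⦄, intTrans q a p → comp p = comp q
  procTrans_comp : ∀ ⦃q J p⦄, procTrans q J p → comp p = comp q

namespace VRA

variable {I C R P Q : Type}

/-- One step of a recursive run, on configurations (state, stack of states). -/
inductive Step (A : VRA I C R P Q) : Q × List Q → VSym I C R → Q × List Q → Prop
  | int {q q' : Q} {σ : List Q} {a : I} :
      A.intTrans q a q' → Step A (q, σ) (VSym.int a) (q', σ)
  | call {q q' p : Q} {σ : List Q} {J : P} {c : C} :
      A.procTrans q J p → (A.link J).1 = c → A.comp q' = some J → A.init q' →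
      Step A (q, σ) (VSym.call c) (q', p :: σ)
  | ret {q p : Q} {σ : List Q} {J : P} {r : R} :
      A.comp q = some J → A.final q → (A.link J).2 = r →
      Step A (q, p :: σ) (VSym.ret r) (p, σ)

/-- Recursive runs of a VRA. -/
inductive Run (A : VRA I C R P Q) : Q × List Q → List (VSym I C R) → Q × List Q → Prop
  | nil (cfg : Q × List Q) : Run A cfg [] cfg
  | cons {cfg₁ cfg₂ cfg₃ : Q × List Q} {a : VSym I C R} {w : List (VSym I C R)} :
      Step A cfg₁ a cfg₂ → Run A cfg₂ w cfg₃ → Run A cfg₁ (a :: w) cfg₃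

/-- The recursive language of the component automaton `A^J` (`J = none` is the
starting automaton): words with a recursive run from an initial state of the
component with empty stack to a final state of the component with empty stack. -/
def RecLang (A : VRA I C R P Q) (J : Option P) : Set (List (VSym I C R)) :=
  {w | ∃ qi qf, A.comp qi = J ∧ A.init qi ∧ A.comp qf = J ∧ A.final qf ∧
    Run A (qi, []) w (qf, [])}

/-- The language of a VRA: the recursive language of its starting automaton. -/
def Lang (A : VRA I C R P Q) : Set (List (VSym I C R)) := A.RecLang none

/-- Regular runs: runs of the component automata viewed as ordinary finite
automata over the alphabet `Σ_int ∪ Σ_proc`. -/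
inductive RegRun (A : VRA I C R P Q) : Q → List (I ⊕ P) → Q → Prop
  | nil (q : Q) : RegRun A q [] q
  | int {q q' p : Q} {a : I} {w : List (I ⊕ P)} :
      A.intTrans q a q' → RegRun A q' w p → RegRun A q (Sum.inl a :: w) p
  | proc {q q' p : Q} {J : P} {w : List (I ⊕ P)} :
      A.procTrans q J q' → RegRun A q' w p → RegRun A q (Sum.inr J :: w) p

/-- The regular language of the component automaton `A^J`, over `Σ_int ∪ Σ_proc`. -/
def RegLang (A : VRA I C R P Q) (J : Option P) : Set (List (I ⊕ P)) :=
  {w | ∃ qi qf, A.comp qi = J ∧ A.init qi ∧ A.comp qf = J ∧ A.final qf ∧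
    RegRun A qi w qf}

/-- A VRA is codeterministic if component automata linked to the same call/return
pair have pairwise disjoint recursive languages. -/
def Codeterministic (A : VRA I C R P Q) : Prop :=
  ∀ J J' : P, J ≠ J' → A.link J = A.link J' →
    A.RecLang (some J) ∩ A.RecLang (some J') = ∅

/-- A VRA is complete if every state has an outgoing transition on every symbol of
`Σ_int ∪ Σ_proc`, and for every call/return pair the recursive languages of the
linked component automata cover all well-matched words. -/
def Complete (A : VRA I C R P Q) : Prop :=
  (∀ (q : Q) (a : I), ∃ p, A.intTrans q a p) ∧
  (∀ (q : Q) (J : P), ∃ p, A.procTrans q J p) ∧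
  (∀ (c : C) (r : R),
    (⋃ J ∈ {J : P | A.link J = (c, r)}, A.RecLang (some J)) = {w | WellMatched w})

/-- A VRA is deterministic if every component automaton (including the starting
one) has a unique initial state and deterministic transitions, and procedural
transitions from a common state on procedural symbols with the same call symbol
agree on the procedural symbol. -/
def Deterministic (A : VRA I C R P Q) : Prop :=
  (∀ J : Option P, ∃! q, A.comp q = J ∧ A.init q) ∧
  (∀ q a p p', A.intTrans q a p → A.intTrans q a p' → p = p') ∧
  (∀ q J p p', A.procTrans q J p → A.procTrans q J p' → p = p') ∧
  (∀ q J J' p p', A.procTrans q J p → A.procTrans q J' p' →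
    (A.link J).1 = (A.link J').1 → J = J')

/-- All component automata of the VRA are complete DFAs: a unique initial state in
each component and exactly one outgoing transition per state and symbol. -/
def AllCompleteDFA (A : VRA I C R P Q) : Prop :=
  (∀ J : Option P, ∃! q, A.comp q = J ∧ A.init q) ∧
  (∀ (q : Q) (a : I), ∃! p, A.intTrans q a p) ∧
  (∀ (q : Q) (J : P), ∃! p, A.procTrans q J p)

/-- The size of a VRA: number of states plus number of transitions. -/
noncomputable def size (A : VRA I C R P Q) : ℕ :=
  Nat.card Q + Nat.card {t : Q × I × Q // A.intTrans t.1 t.2.1 t.2.2}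
    + Nat.card {t : Q × P × Q // A.procTrans t.1 t.2.1 t.2.2}

end VRA

namespace VRA

variable {I C R P Q : Type}

/-- Abstraction relation: a well-matched word over the pushdown alphabet and its
regular abstraction over `Σ_int ∪ Σ_proc`, where each matched bracket
`c u r` with `u` in the recursive language of a component `J` linked to `(c, r)`
is replaced by the procedural symbol `J`. -/
inductive Abs (A : VRA I C R P Q) : List (VSym I C R) → List (I ⊕ P) → Prop
  | nil : Abs A [] []
  | int {w x} {a : I} : Abs A w x → Abs A (VSym.int a :: w) (Sum.inl a :: x)
  | proc {w x u} {J : P} {c : C} {r : R} :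
      (A.link J).1 = c → (A.link J).2 = r → u ∈ A.RecLang (some J) →
      Abs A w x → Abs A (VSym.call c :: (u ++ VSym.ret r :: w)) (Sum.inr J :: x)

theorem Run.append {A : VRA I C R P Q} {c₁ c₂ c₃ : Q × List Q}
    {w₁ w₂ : List (VSym I C R)}
    (h₁ : Run A c₁ w₁ c₂) (h₂ : Run A c₂ w₂ c₃) : Run A c₁ (w₁ ++ w₂) c₃ := by
  induction h₁ with
  | nil => exact h₂
  | cons s _ ih => exact .cons s (ih h₂)

theorem Step.frame {A : VRA I C R P Q} {c₁ c₂ : Q × List Q} {a : VSym I C R}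
    (τ : List Q) (h : Step A c₁ a c₂) :
    Step A (c₁.1, c₁.2 ++ τ) a (c₂.1, c₂.2 ++ τ) := by
  cases h with
  | int h => exact .int h
  | call h h1 h2 h3 => exact .call h h1 h2 h3
  | ret h1 h2 h3 => exact .ret h1 h2 h3

theorem Run.frame {A : VRA I C R P Q} {c₁ c₂ : Q × List Q} {w : List (VSym I C R)}
    (h : Run A c₁ w c₂) (τ : List Q) :
    Run A (c₁.1, c₁.2 ++ τ) w (c₂.1, c₂.2 ++ τ) := by
  induction h with
  | nil => exact .nil _
  | cons s _ ih => exact .cons (s.frame τ) ih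

theorem regRun_comp {A : VRA I C R P Q} {q q' : Q} {x : List (I ⊕ P)}
    (h : RegRun A q x q') : A.comp q' = A.comp q := by
  induction h with
  | nil => rfl
  | int ht _ ih => exact ih.trans (A.intTrans_comp ht)
  | proc ht _ ih => exact ih.trans (A.procTrans_comp ht)

/-- From a regular run on an abstraction, build a recursive run. -/
theorem Abs.toRun {A : VRA I C R P Q} {w : List (VSym I C R)} {x : List (I ⊕ P)}
    (h : Abs A w x) :
    ∀ {q q' : Q}, RegRun A q x q' → Run A (q, []) w (q', []) := by
  induction h with
  | nil => intro q q' h; cases h; exact .nil _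
  | int _ ih =>
    intro q q' h
    cases h with
    | int ht hrr => exact .cons (.int ht) (ih hrr)
  | proc hc hr hu _ ih =>
    intro q q' h
    cases h with
    | @proc _ q₂ _ _ _ ht hrr =>
      obtain ⟨qi, qf, hci, hii, hcf, hff, hrun⟩ := hu
      exact .cons (.call ht hc hci hii)
        (Run.append (hrun.frame [q₂]) (.cons (.ret hcf hff hr) (ih hrr)))

/-- Decomposition of a recursive run ending with empty stack, relative to the
current stack contents. -/
inductive D (A : VRA I C R P Q) : Q → List Q → List (VSym I C R) → Q → Prop
  | base {q q' : Q} {w x} : Abs A w x → RegRun A q x q' → D A q [] w q'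
  | pop {q p : Q} {σ : List Q} {w₁ w₂ : List (VSym I C R)} {x} {qf : Q} {J : P}
      {r : R} {q' : Q} :
      Abs A w₁ x → RegRun A q x qf → A.comp qf = some J → A.final qf →
      (A.link J).2 = r → D A p σ w₂ q' → D A q (p :: σ) (w₁ ++ VSym.ret r :: w₂) q'

theorem D.consInt {A : VRA I C R P Q} {q q₂ q' : Q} {σ : List Q} {a : I}
    {w : List (VSym I C R)} (h : A.intTrans q a q₂) (hd : D A q₂ σ w q') :
    D A q σ (VSym.int a :: w) q' := by
  cases hd with
  | base ha hrr => exact .base ha.int (.int h hrr)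
  | pop ha hrr hcf hff hlr hd =>
    simpa using D.pop ha.int (RegRun.int h hrr) hcf hff hlr hd

theorem D.consProc {A : VRA I C R P Q} {q p' q' : Q} {σ : List Q}
    {w u : List (VSym I C R)} {J : P} {c : C} {r : R}
    (hp : A.procTrans q J p') (hc : (A.link J).1 = c) (hr : (A.link J).2 = r)
    (hu : u ∈ A.RecLang (some J)) (hd : D A p' σ w q') :
    D A q σ (VSym.call c :: (u ++ VSym.ret r :: w)) q' := by
  cases hd with
  | base ha hrr => exact .base (.proc hc hr hu ha) (.proc hp hrr)
  | pop ha hrr hcf hff hlr hd =>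
    simpa using D.pop (Abs.proc hc hr hu ha) (RegRun.proc hp hrr) hcf hff hlr hd

theorem run_to_D {A : VRA I C R P Q} :
    ∀ {c₁ : Q × List Q} {w : List (VSym I C R)} {c₂ : Q × List Q},
      Run A c₁ w c₂ → c₂.2 = [] → D A c₁.1 c₁.2 w c₂.1 := by
  intro c₁ w c₂ h
  induction h with
  | nil cfg =>
    intro he
    rw [he]
    exact .base .nil (.nil _)
  | cons s _ ih =>
    intro he
    cases s with
    | int ht => exact D.consInt ht (ih he)
    | @call q qi p σ J c hp hc1 hc2 hinit =>
      have hd := ih he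
      cases hd with
      | @pop _ _ _ w₁ w₂ x qfs J' r' _ ha hrg hcf hff hlr hd =>
        have h1 : A.comp qfs = some J := (regRun_comp hrg).trans hc2
        have hJ : J' = J := by rw [hcf] at h1; exact Option.some.inj h1
        subst hJ
        exact D.consProc hp hc1 hlr
          ⟨_, qfs, hc2, hinit, hcf, hff, ha.toRun hrg⟩ hd
    | ret hcf hff hlr =>
      exact D.pop Abs.nil (RegRun.nil _) hcf hff hlr (ih he)

theorem Abs.append {A : VRA I C R P Q} {w₁ w₂ : List (VSym I C R)}
    {x₁ x₂ : List (I ⊕ P)} (h₁ : Abs A w₁ x₁) (h₂ : Abs A w₂ x₂) :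
    Abs A (w₁ ++ w₂) (x₁ ++ x₂) := by
  induction h₁ with
  | nil => exact h₂
  | int _ ih => exact ih.int
  | proc hc hr hu _ ih => simpa using Abs.proc hc hr hu ih

theorem Abs.split {A : VRA I C R P Q} :
    ∀ {x₁ : List (I ⊕ P)} {w : List (VSym I C R)} {x₂ : List (I ⊕ P)},
      Abs A w (x₁ ++ x₂) →
      ∃ w₁ w₂, w = w₁ ++ w₂ ∧ Abs A w₁ x₁ ∧ Abs A w₂ x₂ := by
  intro x₁
  induction x₁ with
  | nil => intro w x₂ h; exact ⟨[], w, rfl, .nil, h⟩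
  | cons y x₁ ih =>
    intro w x₂ h
    cases h with
    | int h' =>
      obtain ⟨w₁, w₂, rfl, h₁, h₂⟩ := ih h'
      exact ⟨_ :: w₁, w₂, rfl, h₁.int, h₂⟩
    | @proc _ _ u J c r hc hr hu h' =>
      obtain ⟨w₁, w₂, rfl, h₁, h₂⟩ := ih h'
      exact ⟨VSym.call c :: (u ++ VSym.ret r :: w₁), w₂, by simp,
        .proc hc hr hu h₁, h₂⟩

/-- Transfer of abstraction along an embedding of components that preserves the
linking function and the recursive languages. -/
theorem Abs.transfer {P' Q' : Type} {A : VRA I C R P Q} {B : VRA I C R P' Q'}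
    (f : P → P') (hl : ∀ J, B.link (f J) = A.link J)
    (hr : ∀ J, B.RecLang (some (f J)) = A.RecLang (some J))
    {w : List (VSym I C R)} {u : List (I ⊕ P)} :
    Abs A w u ↔ Abs B w (u.map (Sum.map id f)) := by
  constructor
  · intro h
    induction h with
    | nil => exact .nil
    | int _ ih => exact ih.int
    | proc hc hrr hu _ ih =>
      exact .proc (by rw [hl]; exact hc) (by rw [hl]; exact hrr)
        (by rw [hr]; exact hu) ih
  · intro h
    induction u generalizing w with
    | nil => cases h; exact .nil
    | cons y u ih =>
      simp only [List.map_cons] at h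
      cases y with
      | inl a =>
        simp only [Sum.map_inl, id_eq] at h
        cases h with
        | int h' => exact (ih h').int
      | inr J =>
        simp only [Sum.map_inr] at h
        cases h with
        | proc hc hrr hu h' =>
          exact .proc (by rw [← hl]; exact hc) (by rw [← hl]; exact hrr)
            (by rw [← hr]; exact hu) (ih h')

end VRA

/-- if `B` is obtained from VRAs `A₁`, `A₂` (with disjoint
procedural alphabets, modeled by the sum type `P₁ ⊕ P₂`) by taking the union of
their component automata (so the linking function and the recursive languages of
the components carry over) and a starting automaton whose regular language is the
concatenation `L_reg(A₁^S) · L_reg(A₂^S)`, then `L(B) = L(A₁) · L(A₂)`. -/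
theorem VRA.concat_construction {I C R P₁ P₂ Q₁ Q₂ QB : Type}
    (A₁ : VRA I C R P₁ Q₁) (A₂ : VRA I C R P₂ Q₂)
    (B : VRA I C R (P₁ ⊕ P₂) QB)
    (hlink : B.link = Sum.elim A₁.link A₂.link)
    (hrec₁ : ∀ J : P₁, B.RecLang (some (Sum.inl J)) = A₁.RecLang (some J))
    (hrec₂ : ∀ J : P₂, B.RecLang (some (Sum.inr J)) = A₂.RecLang (some J))
    (hreg : B.RegLang none =
      {w | ∃ u ∈ A₁.RegLang none, ∃ v ∈ A₂.RegLang none,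
        w = u.map (Sum.map id Sum.inl) ++ v.map (Sum.map id Sum.inr)}) :
    B.Lang = {w | ∃ u ∈ A₁.Lang, ∃ v ∈ A₂.Lang, w = u ++ v} := by
  have hl₁ : ∀ J : P₁, B.link (Sum.inl J) = A₁.link J := fun J => by rw [hlink]; rfl
  have hl₂ : ∀ J : P₂, B.link (Sum.inr J) = A₂.link J := fun J => by rw [hlink]; rfl
  ext w
  simp only [Lang, RecLang, Set.mem_setOf_eq]
  constructor
  · rintro ⟨qi, qf, hci, hii, hcf, hff, hrun⟩
    have hd := run_to_D hrun rfl
    cases hd with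
    | @base _ _ _ x habs hrg =>
      have hx : x ∈ B.RegLang none := ⟨qi, qf, hci, hii, hcf, hff, hrg⟩
      rw [hreg] at hx
      obtain ⟨u, hu, v, hv, hxeq⟩ := hx
      obtain ⟨w₁, w₂, rfl, h₁, h₂⟩ := Abs.split (hxeq ▸ habs)
      obtain ⟨q₁, q₂, a1, a2, a3, a4, hrr₁⟩ := hu
      obtain ⟨q₃, q₄, b1, b2, b3, b4, hrr₂⟩ := hv
      exact ⟨w₁, ⟨q₁, q₂, a1, a2, a3, a4,
          ((Abs.transfer Sum.inl hl₁ hrec₁).mpr h₁).toRun hrr₁⟩,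
        w₂, ⟨q₃, q₄, b1, b2, b3, b4,
          ((Abs.transfer Sum.inr hl₂ hrec₂).mpr h₂).toRun hrr₂⟩, rfl⟩
  · rintro ⟨w₁, ⟨q₁, q₂, a1, a2, a3, a4, hr₁⟩, w₂, ⟨q₃, q₄, b1, b2, b3, b4, hr₂⟩, rfl⟩
    have hd₁ := run_to_D hr₁ rfl
    have hd₂ := run_to_D hr₂ rfl
    cases hd₁ with
    | @base _ _ _ x₁ ha₁ hg₁ =>
      cases hd₂ with
      | @base _ _ _ x₂ ha₂ hg₂ =>
        have hx : x₁.map (Sum.map id Sum.inl) ++ x₂.map (Sum.map id Sum.inr) ∈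
            B.RegLang none := by
          rw [hreg]
          exact ⟨_, ⟨q₁, q₂, a1, a2, a3, a4, hg₁⟩,
            _, ⟨q₃, q₄, b1, b2, b3, b4, hg₂⟩, rfl⟩
        obtain ⟨qi, qf, hci, hii, hcf, hff, hrg⟩ := hx
        exact ⟨qi, qf, hci, hii, hcf, hff,
          (Abs.append ((Abs.transfer Sum.inl hl₁ hrec₁).mp ha₁)
            ((Abs.transfer Sum.inr hl₂ hrec₂).mp ha₂)).toRun hrg⟩
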